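/- Let X and Y be sets and R ⊆ X × Y a relation whose indicator χ_R has the double limit property. Let μ be a finitely additive probability measure on C_X(R) given by μ(A) = ∑_{i∈I, A∈U_i} r_i for pairwise distinct ultrafilters (U_i)_{i∈I} on C_X(R) and positive reals r_i with ∑_{i∈I} r_i = 1 (I ⊆ ℕ), and let ν be a finitely additive probability measure on C_Y(R) given by ν(B) = ∑_{j∈J, B∈V_j} s_j for pairwise distinct ultrafilters (V_j)_{j∈J} on C_Y(R) and positive reals s_j with ∑_{j∈J} s_j = 1 (J ⊆ ℕ). Then every set d_{U_i} belongs to C_Y(R), every set e_{V_j} belongs to C_X(R), and the Morley product commutes: ∑_{i∈I} r_i · ν(d_{U_i}) = ∑_{j∈J} s_j · μ(e_{V_j}). -/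

import Mathlib

open Filter Topology

/-- A Boolean algebra of sets on `X`: contains `∅` and `univ`, closed under
finite unions, finite intersections and complements. -/
def IsBoolAlg {X : Type*} (C : Set (Set X)) : Prop :=
  ∅ ∈ C ∧ Set.univ ∈ C ∧
    (∀ A ∈ C, ∀ B ∈ C, A ∪ B ∈ C) ∧
    (∀ A ∈ C, ∀ B ∈ C, A ∩ B ∈ C) ∧
    (∀ A ∈ C, Aᶜ ∈ C)

/-- An ultrafilter on a Boolean algebra of sets `C`. -/
def IsUltraOn {X : Type*} (C : Set (Set X)) (U : Set (Set X)) : Prop :=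
  U ⊆ C ∧ ∅ ∉ U ∧ Set.univ ∈ U ∧
    (∀ A ∈ U, ∀ B ∈ U, A ∩ B ∈ U) ∧
    (∀ A ∈ U, ∀ B ∈ C, A ⊆ B → B ∈ U) ∧
    (∀ A ∈ C, A ∈ U ∨ Aᶜ ∈ U)

/-- A finitely additive probability measure on `C`. -/
def IsFAP {X : Type*} (C : Set (Set X)) (μ : Set X → ℝ) : Prop :=
  (∀ A ∈ C, 0 ≤ μ A) ∧ μ Set.univ = 1 ∧
    (∀ A ∈ C, ∀ B ∈ C, A ∩ B = ∅ → μ (A ∪ B) = μ A + μ B)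

/-- `μ` is strongly continuous on `C`: for every `ε > 0` there is a finite
partition of `X` into members of `C`, each of measure `< ε`. -/
def StrongCont {X : Type*} (C : Set (Set X)) (μ : Set X → ℝ) : Prop :=
  ∀ ε : ℝ, 0 < ε → ∃ (n : ℕ) (F : Fin n → Set X),
    (∀ i, F i ∈ C) ∧ (⋃ i, F i) = Set.univ ∧
    (∀ i j, i ≠ j → F i ∩ F j = ∅) ∧ ∀ i, μ (F i) < ε

/-- `μ` is `{0,1}`-valued on `C`. -/
def ZeroOneValued {X : Type*} (C : Set (Set X)) (μ : Set X → ℝ) : Prop :=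
  ∀ A ∈ C, μ A = 0 ∨ μ A = 1

/-- A 2-tree in `C`: an injective map from finite binary strings into `C` such
that children are strictly below their parent and the two children of a node
are disjoint. -/
def IsTwoTree {X : Type*} (C : Set (Set X)) (t : List Bool → Set X) : Prop :=
  Function.Injective t ∧ (∀ s, t s ∈ C) ∧
    (∀ s b, t (s ++ [b]) ⊂ t s) ∧
    ∀ s, t (s ++ [false]) ∩ t (s ++ [true]) = ∅

/-- The double limit property for `f : A × B → ℝ`: whenever both iterated
limits along sequences exist, they are equal. -/
def DLP {A B : Type*} (f : A → B → ℝ) : Prop :=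
  ∀ (a : ℕ → A) (b : ℕ → B) (u v : ℕ → ℝ) (L L' : ℝ),
    (∀ i, Tendsto (fun j => f (a i) (b j)) atTop (𝓝 (u i))) →
    Tendsto u atTop (𝓝 L) →
    (∀ j, Tendsto (fun i => f (a i) (b j)) atTop (𝓝 (v j))) →
    Tendsto v atTop (𝓝 L') → L = L'

-- The indicator `χ_R` of a relation `R ⊆ X × Y`.
open Classical in
noncomputable def chi {X Y : Type*} (R : Set (X × Y)) : X → Y → ℝ :=
  fun a b => if (a, b) ∈ R then 1 else 0

/-- The Boolean algebra of sets generated by `S`. -/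
def genAlg {X : Type*} (S : Set (Set X)) : Set (Set X) :=
  ⋂₀ {C : Set (Set X) | IsBoolAlg C ∧ S ⊆ C}

/-- `C_X(R)`: the Boolean algebra on `X` generated by the columns of `R`. -/
def colAlg {X Y : Type*} (R : Set (X × Y)) : Set (Set X) :=
  genAlg {A | ∃ b : Y, A = {x : X | (x, b) ∈ R}}

/-- `C_Y(R)`: the Boolean algebra on `Y` generated by the rows of `R`. -/
def rowAlg {X Y : Type*} (R : Set (X × Y)) : Set (Set Y) :=
  genAlg {B | ∃ a : X, B = {y : Y | (a, y) ∈ R}}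

/-- `d_U = {b ∈ Y : {x : (x,b) ∈ R} ∈ U}`. -/
def dSet {X Y : Type*} (R : Set (X × Y)) (U : Set (Set X)) : Set Y :=
  {b : Y | {x : X | (x, b) ∈ R} ∈ U}

/-- `e_V = {a ∈ X : {y : (a,y) ∈ R} ∈ V}`. -/
def eSet {X Y : Type*} (R : Set (X × Y)) (V : Set (Set Y)) : Set X :=
  {a : X | {y : Y | (a, y) ∈ R} ∈ V}

/-- Membership in `conv_δ(Z)`: a nonnegative, countably supported weight
function summing to `1`. -/
def IsConvDelta {Z : Type*} (p : Z → ℝ) : Prop :=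
  (∀ z, 0 ≤ p z) ∧ (Function.support p).Countable ∧ HasSum p 1

/-- `f_c(p, q) = ∑_{(x,y)} p(x) q(y) f(x,y)`. -/
noncomputable def fc {X Y : Type*} (f : X → Y → ℝ) (p : X → ℝ) (q : Y → ℝ) : ℝ :=
  ∑' z : X × Y, p z.1 * q z.2 * f z.1 z.2

/-- The `k`-order property for a relation `R ⊆ X × Y`. -/
def HasKOrderProp {X Y : Type*} (R : Set (X × Y)) (k : ℕ) : Prop :=
  ∃ (a : Fin k → X) (b : Fin k → Y), ∀ i j, (a i, b j) ∈ R ↔ i < j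

-- The pairing `χ(U, V)` on ultrafilters: `1` if `d_U ∈ V`, else `0`.
open Classical in
noncomputable def chiU {X Y : Type*} (R : Set (X × Y))
    (U : {U : Set (Set X) // IsUltraOn (colAlg R) U})
    (V : {V : Set (Set Y) // IsUltraOn (rowAlg R) V}) : ℝ :=
  if dSet R U.1 ∈ V.1 then 1 else 0

/-- `𝓕` shatters the finite set `S`. -/
def ShattersSet {X : Type*} (F : Set (Set X)) (S : Finset X) : Prop :=
  ∀ T ⊆ S, ∃ A ∈ F, A ∩ ↑S = (↑T : Set X)

/-- An atomic probability measure on `X`. -/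
def IsAtomicMeasure {X : Type*} (μ : Set X → ℝ) : Prop :=
  ∃ (I : Set ℕ) (x : ℕ → X) (r : ℕ → ℝ),
    (∀ i ∈ I, 0 ≤ r i) ∧ HasSum (fun i : I => r (i : ℕ)) 1 ∧
    ∀ A : Set X, μ A = ∑' i : {i : ℕ // i ∈ I ∧ x i ∈ A}, r (i : ℕ)

/-- Dependent-choice style recursion with full history. -/
lemma exists_seq_history {α : Type*} (P : List α → α → Prop)
    (h : ∀ l, ∃ a, P l a) :
    ∃ f : ℕ → α, ∀ n, P ((List.range n).map f) (f n) := by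
  classical
  let L : ℕ → List α := fun n => Nat.rec [] (fun _ l => l ++ [Classical.choose (h l)]) n
  let f : ℕ → α := fun n => Classical.choose (h (L n))
  have hL : ∀ n, L n = (List.range n).map f := by
    intro n
    induction n with
    | zero => simp [L]
    | succ n ih =>
        have : L (n+1) = L n ++ [Classical.choose (h (L n))] := rfl
        rw [this, ih, List.range_succ, List.map_append]
        simp [f, ih]
  refine ⟨f, fun n => ?_⟩
  have hg : P ((List.range n).map f) (f n) = P (L n) (f n) := by rw [hL n]
  rw [hg]
  exact Classical.choose_spec (h (L n))

lemma list_inter_mem {β α : Type*} {F : Filter α} {l : List β} {Q : β → Set α}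
    (h : ∀ x ∈ l, Q x ∈ F) : {a | ∀ x ∈ l, a ∈ Q x} ∈ F := by
  induction l with
  | nil => simpa using Filter.univ_mem
  | cons y l ih =>
      have he : {a | ∀ x ∈ y :: l, a ∈ Q x} = Q y ∩ {a | ∀ x ∈ l, a ∈ Q x} := by
        ext a; simp
      rw [he]
      exact Filter.inter_mem (h y (by simp)) (ih fun x hx => h x (List.mem_cons_of_mem _ hx))

lemma extract_mono {G : Set ℕ} {T : ℕ → Set ℕ} (hG : G ∈ Filter.hyperfilter ℕ)
    (hT : ∀ i ∈ G, T i ∈ Filter.hyperfilter ℕ) :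
    ∃ g : ℕ → ℕ, StrictMono g ∧ (∀ k, g k ∈ G) ∧ ∀ k l, k < l → g l ∈ T (g k) := by
  classical
  obtain ⟨f, hf⟩ := exists_seq_history
    (P := fun (l : List ℕ) (a : ℕ) =>
      (∀ x ∈ l, x ∈ G) → (a ∈ G ∧ ∀ x ∈ l, x < a ∧ a ∈ T x))
    (fun l => by
      by_cases hl : ∀ x ∈ l, x ∈ G
      · have h1 : {a | ∀ x ∈ l, a ∈ ({j | x < j} ∩ T x)} ∈ Filter.hyperfilter ℕ := by
          refine list_inter_mem (fun x hx => Filter.inter_mem ?_ (hT x (hl x hx)))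
          have hfin : ({j | x < j}ᶜ).Finite :=
            (Set.finite_Iic x).subset (fun j hj => by simpa using hj)
          have := hfin.compl_mem_hyperfilter
          rwa [compl_compl] at this
        have h2 : (G ∩ {a | ∀ x ∈ l, a ∈ ({j | x < j} ∩ T x)}).Nonempty :=
          Filter.nonempty_of_mem (Filter.inter_mem hG h1)
        obtain ⟨a, haG, ha⟩ := h2
        exact ⟨a, fun _ => ⟨haG, fun x hx => ⟨(ha x hx).1, (ha x hx).2⟩⟩⟩
      · exact ⟨0, fun h => absurd h hl⟩)
  -- prove the invariant holds for every prefix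
  have hinv : ∀ n, ∀ x ∈ (List.range n).map f, x ∈ G := by
    intro n
    induction n with
    | zero => simp
    | succ n ih =>
        intro x hx
        rw [List.range_succ, List.map_append] at hx
        rcases List.mem_append.mp hx with h | h
        · exact ih x h
        · simp at h
          subst h
          exact ((hf n) (ih)).1
  have hspec : ∀ n, f n ∈ G ∧ ∀ x ∈ (List.range n).map f, x < f n ∧ f n ∈ T x :=
    fun n => (hf n) (hinv n)
  have hmemrange : ∀ {m n : ℕ}, m < n → f m ∈ (List.range n).map f := by
    intro m n hmn
    exact List.mem_map_of_mem (f := f) (List.mem_range.mpr hmn)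
  refine ⟨f, ?_, fun k => (hspec k).1, fun k l hkl => ((hspec l).2 _ (hmemrange hkl)).2⟩
  exact strictMono_nat_of_lt_succ fun n => ((hspec (n+1)).2 _ (hmemrange (Nat.lt_succ_self n))).1

/-- Infinite Ramsey for pairs, two colours. -/
lemma ramsey_pairs (c : ℕ → ℕ → Prop) :
    ∃ g : ℕ → ℕ, StrictMono g ∧
      ((∀ k l, k < l → c (g k) (g l)) ∨ (∀ k l, k < l → ¬ c (g k) (g l))) := by
  classical
  by_cases hg : {i | {j | c i j} ∈ Filter.hyperfilter ℕ} ∈ Filter.hyperfilter ℕ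
  · obtain ⟨g, hmono, hG, hT⟩ := extract_mono hg (fun i hi => hi)
    exact ⟨g, hmono, Or.inl fun k l hkl => hT k l hkl⟩
  · have hg' : {i | {j | c i j} ∈ Filter.hyperfilter ℕ}ᶜ ∈ Filter.hyperfilter ℕ :=
      Ultrafilter.compl_mem_iff_notMem.mpr hg
    obtain ⟨g, hmono, hG, hT⟩ := extract_mono (T := fun i => {j | ¬ c i j}) hg'
      (fun i hi => by
        have : {j | c i j} ∉ Filter.hyperfilter ℕ := hi
        have := Ultrafilter.compl_mem_iff_notMem.mpr this
        exact this)
    exact ⟨g, hmono, Or.inr fun k l hkl => hT k l hkl⟩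

lemma isBoolAlg_genAlg {X : Type*} (S : Set (Set X)) : IsBoolAlg (genAlg S) :=
  ⟨fun C hC => hC.1.1,
   fun C hC => hC.1.2.1,
   fun A hA B hB C hC => hC.1.2.2.1 A (hA C hC) B (hB C hC),
   fun A hA B hB C hC => hC.1.2.2.2.1 A (hA C hC) B (hB C hC),
   fun A hA C hC => hC.1.2.2.2.2 A (hA C hC)⟩

lemma subset_genAlg {X : Type*} (S : Set (Set X)) : S ⊆ genAlg S :=
  fun _ hA C hC => hC.2 hA

-- finite unions
lemma biUnion_mem_alg {X ι : Type*} {C : Set (Set X)} (hC : IsBoolAlg C)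
    (t : Finset ι) (f : ι → Set X) (hf : ∀ i ∈ t, f i ∈ C) :
    (⋃ i ∈ t, f i) ∈ C := by
  classical
  induction t using Finset.induction_on with
  | empty => simpa using hC.1
  | insert _ _ hx ih =>
      rw [Finset.set_biUnion_insert]
      exact hC.2.2.1 _ (hf _ (Finset.mem_insert_self _ _)) _
        (ih fun i hi => hf i (Finset.mem_insert_of_mem hi))

section Aux
variable {X Y : Type*} {R : Set (X × Y)}

lemma col_mem_colAlg (R : Set (X × Y)) (b : Y) : {x : X | (x, b) ∈ R} ∈ colAlg R :=
  subset_genAlg _ ⟨b, rfl⟩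

lemma row_mem_rowAlg (R : Set (X × Y)) (a : X) : {y : Y | (a, y) ∈ R} ∈ rowAlg R :=
  subset_genAlg _ ⟨a, rfl⟩

lemma isBoolAlg_colAlg (R : Set (X × Y)) : IsBoolAlg (colAlg R) := isBoolAlg_genAlg _
lemma isBoolAlg_rowAlg (R : Set (X × Y)) : IsBoolAlg (rowAlg R) := isBoolAlg_genAlg _

-- ultrafilter helpers
lemma ultra_compl_mem {C U : Set (Set X)} (hU : IsUltraOn C U) {A : Set X}
    (hA : A ∈ C) (h : A ∉ U) : Aᶜ ∈ U := (hU.2.2.2.2.2 A hA).resolve_left h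

lemma ultra_not_mem_of_compl {C U : Set (Set X)} (hU : IsUltraOn C U) {A : Set X}
    (h : Aᶜ ∈ U) : A ∉ U := fun hA => by
  have := hU.2.2.2.1 A hA Aᶜ h
  rw [Set.inter_compl_self] at this
  exact hU.2.1 this

lemma ultra_nonempty_of_mem {C U : Set (Set X)} (hU : IsUltraOn C U) {A : Set X}
    (h : A ∈ U) : A.Nonempty := by
  rcases Set.eq_empty_or_nonempty A with rfl | hne
  · exact absurd h hU.2.1
  · exact hne

lemma ultra_list_inter {β : Type*} {C U : Set (Set X)} (hU : IsUltraOn C U)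
    {l : List β} {Q : β → Set X} (h : ∀ x ∈ l, Q x ∈ U) :
    {a | ∀ x ∈ l, a ∈ Q x} ∈ U := by
  induction l with
  | nil =>
      have he : {a : X | ∀ x ∈ ([] : List β), a ∈ Q x} = Set.univ := by ext a; simp
      rw [he]; exact hU.2.2.1
  | cons y l ih =>
      have he : {a | ∀ x ∈ y :: l, a ∈ Q x} = Q y ∩ {a | ∀ x ∈ l, a ∈ Q x} := by
        ext a; simp
      rw [he]
      exact hU.2.2.2.1 _ (h y (by simp)) _ (ih fun x hx => h x (List.mem_cons_of_mem _ hx))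

lemma tendsto_of_eventually_const {g : ℕ → ℝ} {c : ℝ} {N : ℕ} (h : ∀ n, N ≤ n → g n = c) :
    Tendsto g atTop (𝓝 c) :=
  tendsto_const_nhds.congr' (eventually_atTop.mpr ⟨N, fun n hn => (h n hn).symm⟩)

/-- DLP rules out patterns that are constant (with different values) above and
below the diagonal. -/
lemma dlp_triangle (h : DLP (chi R)) {a : ℕ → X} {b : ℕ → Y} {P Q : Prop}
    (hup : ∀ i j, i < j → ((a i, b j) ∈ R ↔ P))
    (hlo : ∀ i j, j < i → ((a i, b j) ∈ R ↔ Q)) (hne : ¬(P ↔ Q)) : False := by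
  classical
  set p : ℝ := if P then 1 else 0 with hp
  set q : ℝ := if Q then 1 else 0 with hq
  have hpq : p = q := by
    refine h a b (fun _ => p) (fun _ => q) p q ?_ tendsto_const_nhds ?_ tendsto_const_nhds
    · intro i
      refine tendsto_of_eventually_const (N := i + 1) fun j hj => ?_
      have hij : i < j := hj
      simp only [chi]
      by_cases hP : P
      · rw [if_pos ((hup i j hij).mpr hP), hp, if_pos hP]
      · rw [if_neg (fun hr => hP ((hup i j hij).mp hr)), hp, if_neg hP]
    · intro j
      refine tendsto_of_eventually_const (N := j + 1) fun i hi => ?_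
      have hij : j < i := hi
      simp only [chi]
      by_cases hQ : Q
      · rw [if_pos ((hlo i j hij).mpr hQ), hq, if_pos hQ]
      · rw [if_neg (fun hr => hQ ((hlo i j hij).mp hr)), hq, if_neg hQ]
  apply hne
  by_cases hP : P <;> by_cases hQ : Q <;> simp [hp, hq, hP, hQ] at hpq ⊢

end Aux

section StepA
variable {X Y : Type*} {R : Set (X × Y)}

/-- If a finite list of elements of `X` separates `d_U`, then `d_U` is in the
row algebra. -/
lemma dSet_mem_rowAlg_of_sep {U : Set (Set X)} (l : List X)
    (sep : ∀ b b' : Y, (∀ a ∈ l, ((a, b) ∈ R ↔ (a, b') ∈ R)) →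
      ({x | (x, b) ∈ R} ∈ U ↔ {x | (x, b') ∈ R} ∈ U)) :
    dSet R U ∈ rowAlg R := by
  classical
  have halg := isBoolAlg_rowAlg R
  set Q : Finset X → Set Y := fun c => {y | ∀ a ∈ l, ((a, y) ∈ R ↔ a ∈ c)} with hQdef
  have hQ : ∀ c, Q c ∈ rowAlg R := by
    intro c
    suffices hgen : ∀ l' : List X, {y | ∀ a ∈ l', ((a, y) ∈ R ↔ a ∈ c)} ∈ rowAlg R from hgen l
    intro l'
    induction l' with
    | nil =>
        have he : {y : Y | ∀ a ∈ ([] : List X), ((a, y) ∈ R ↔ a ∈ c)} = Set.univ := by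
          ext y; simp
        rw [he]; exact halg.2.1
    | cons a l' ih =>
        have he : {y | ∀ x ∈ a :: l', ((x, y) ∈ R ↔ x ∈ c)} =
            {y | (a, y) ∈ R ↔ a ∈ c} ∩ {y | ∀ x ∈ l', ((x, y) ∈ R ↔ x ∈ c)} := by
          ext y; simp [forall_and]
        rw [he]
        refine halg.2.2.2.1 _ ?_ _ ih
        by_cases hac : a ∈ c
        · have : {y | (a, y) ∈ R ↔ a ∈ c} = {y | (a, y) ∈ R} := by ext y; simp [hac]
          rw [this]; exact row_mem_rowAlg R a
        · have : {y | (a, y) ∈ R ↔ a ∈ c} = {y | (a, y) ∈ R}ᶜ := by ext y; simp [hac]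
          rw [this]; exact halg.2.2.2.2 _ (row_mem_rowAlg R a)
  set pat : Y → Finset X := fun b => l.toFinset.filter (fun a => (a, b) ∈ R) with hpat
  set S : Finset (Finset X) :=
    l.toFinset.powerset.filter (fun c => ∃ b ∈ dSet R U, pat b = c) with hS
  have key : dSet R U = ⋃ c ∈ S, Q c := by
    ext y
    simp only [Set.mem_iUnion, exists_prop]
    constructor
    · intro hy
      refine ⟨pat y, ?_, ?_⟩
      · rw [hS, Finset.mem_filter, Finset.mem_powerset]
        exact ⟨Finset.filter_subset _ _, y, hy, rfl⟩
      · intro a ha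
        rw [hpat]
        simp [Finset.mem_filter, List.mem_toFinset, ha]
    · rintro ⟨c, hcS, hyc⟩
      rw [hS, Finset.mem_filter] at hcS
      obtain ⟨-, b, hb, hpatb⟩ := hcS
      have hsame : ∀ a ∈ l, ((a, y) ∈ R ↔ (a, b) ∈ R) := by
        intro a ha
        have h1 : (a, y) ∈ R ↔ a ∈ c := hyc a ha
        have h2 : (a, b) ∈ R ↔ a ∈ c := by
          rw [← hpatb, hpat]
          simp [Finset.mem_filter, List.mem_toFinset, ha]
        exact h1.trans h2.symm
      exact (sep y b hsame).mpr hb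
  rw [key]
  exact biUnion_mem_alg halg S Q (fun c _ => hQ c)

end StepA

section Definability
variable {X Y : Type*} {R : Set (X × Y)}

/-- Main lemma: if `χ_R` has the double limit property then `d_U ∈ C_Y(R)` for
every ultrafilter `U` on `C_X(R)`. -/
lemma dSet_mem_rowAlg (h : DLP (chi R)) {U : Set (Set X)}
    (hU : IsUltraOn (colAlg R) U) : dSet R U ∈ rowAlg R := by
  classical
  by_cases hsep : ∃ l : List X, ∀ b b' : Y,
      (∀ a ∈ l, ((a, b) ∈ R ↔ (a, b') ∈ R)) →
        ({x | (x, b) ∈ R} ∈ U ↔ {x | (x, b') ∈ R} ∈ U)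
  · obtain ⟨l, sep⟩ := hsep
    exact dSet_mem_rowAlg_of_sep l sep
  exfalso
  push_neg at hsep
  -- from each list we can pick a "good/bad" pair with the same pattern
  have hpair : ∀ l : List X, ∃ b b' : Y,
      (∀ a ∈ l, ((a, b) ∈ R ↔ (a, b') ∈ R)) ∧
      {x | (x, b) ∈ R} ∈ U ∧ {x | (x, b') ∈ R} ∉ U := by
    intro l
    obtain ⟨b, b', hsa, hne⟩ := hsep l
    rcases hne with ⟨h1, h2⟩ | ⟨h1, h2⟩
    · exact ⟨b, b', hsa, h1, h2⟩
    · exact ⟨b', b, fun a ha => (hsa a ha).symm, h2, h1⟩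
  have hXne : Nonempty X := ⟨(ultra_nonempty_of_mem hU hU.2.2.1).choose⟩
  have hYne : Nonempty Y := ⟨(hpair []).choose⟩
  -- recursive construction of triples
  obtain ⟨f, hf⟩ := exists_seq_history
    (P := fun (l : List (X × Y × Y)) (t : X × Y × Y) =>
      (∀ t₀ ∈ l, {x | (x, t₀.2.1) ∈ R} ∈ U ∧ {x | (x, t₀.2.2) ∈ R} ∉ U) →
        ({x | (x, t.2.1) ∈ R} ∈ U ∧ {x | (x, t.2.2) ∈ R} ∉ U ∧
         (∀ t₀ ∈ l, ((t₀.1, t.2.1) ∈ R ↔ (t₀.1, t.2.2) ∈ R)) ∧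
         ((t.1, t.2.1) ∈ R ∧ (t.1, t.2.2) ∉ R) ∧
         (∀ t₀ ∈ l, (t.1, t₀.2.1) ∈ R ∧ (t.1, t₀.2.2) ∉ R)))
    (by
      intro l
      by_cases hinv : ∀ t₀ ∈ l, {x | (x, t₀.2.1) ∈ R} ∈ U ∧ {x | (x, t₀.2.2) ∈ R} ∉ U
      · obtain ⟨b, b', hsa, hbU, hb'U⟩ := hpair (l.map Prod.fst)
        have hb'c : {x | (x, b') ∈ R}ᶜ ∈ U :=
          ultra_compl_mem hU (col_mem_colAlg R b') hb'U
        have hmem : ({x | (x, b) ∈ R} ∩ ({x | (x, b') ∈ R}ᶜ ∩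
            {x | ∀ t₀ ∈ l, x ∈ ({x | (x, t₀.2.1) ∈ R} ∩ {x | (x, t₀.2.2) ∈ R}ᶜ)})) ∈ U := by
          refine hU.2.2.2.1 _ hbU _ (hU.2.2.2.1 _ hb'c _ ?_)
          refine ultra_list_inter hU (fun t₀ ht₀ => ?_)
          exact hU.2.2.2.1 _ (hinv t₀ ht₀).1 _
            (ultra_compl_mem hU (col_mem_colAlg R t₀.2.2) (hinv t₀ ht₀).2)
        obtain ⟨a, ha1, ha2, ha3⟩ := ultra_nonempty_of_mem hU hmem
        refine ⟨(a, b, b'), fun _ => ⟨hbU, hb'U, ?_, ⟨ha1, ha2⟩, ?_⟩⟩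
        · intro t₀ ht₀
          exact hsa t₀.1 (List.mem_map_of_mem (f := Prod.fst) ht₀)
        · intro t₀ ht₀
          exact ⟨(ha3 t₀ ht₀).1, (ha3 t₀ ht₀).2⟩
      · exact ⟨(Classical.arbitrary (X × Y × Y)), fun hi => absurd hi hinv⟩)
  -- the invariant holds along the sequence
  have hinv : ∀ n, ∀ t₀ ∈ (List.range n).map f,
      {x | (x, t₀.2.1) ∈ R} ∈ U ∧ {x | (x, t₀.2.2) ∈ R} ∉ U := by
    intro n
    induction n with
    | zero => simp
    | succ n ih =>
        intro t₀ ht₀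
        rw [List.range_succ, List.map_append] at ht₀
        rcases List.mem_append.mp ht₀ with hm | hm
        · exact ih t₀ hm
        · simp only [List.map_cons, List.map_nil, List.mem_singleton] at hm
          subst hm
          exact ⟨((hf n) ih).1, ((hf n) ih).2.1⟩
  have hspec : ∀ n,
      ({x | (x, (f n).2.1) ∈ R} ∈ U ∧ {x | (x, (f n).2.2) ∈ R} ∉ U ∧
       (∀ t₀ ∈ (List.range n).map f, (((t₀.1, (f n).2.1) ∈ R ↔ (t₀.1, (f n).2.2) ∈ R))) ∧
       (((f n).1, (f n).2.1) ∈ R ∧ ((f n).1, (f n).2.2) ∉ R) ∧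
       (∀ t₀ ∈ (List.range n).map f, ((f n).1, t₀.2.1) ∈ R ∧ ((f n).1, t₀.2.2) ∉ R)) :=
    fun n => (hf n) (hinv n)
  have hmemrange : ∀ {m n : ℕ}, m < n → f m ∈ (List.range n).map f :=
    fun hmn => List.mem_map_of_mem (f := f) (List.mem_range.mpr hmn)
  set a : ℕ → X := fun n => (f n).1 with ha
  set b : ℕ → Y := fun n => (f n).2.1 with hb
  set b' : ℕ → Y := fun n => (f n).2.2 with hb'
  -- key combinatorial facts
  have hlow : ∀ i j, j ≤ i → ((a i, b j) ∈ R ∧ (a i, b' j) ∉ R) := by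
    intro i j hji
    rcases eq_or_lt_of_le hji with rfl | hji
    · exact (hspec j).2.2.2.1
    · exact (hspec i).2.2.2.2 (f j) (hmemrange hji)
  have hup : ∀ i j, i < j → ((a i, b j) ∈ R ↔ (a i, b' j) ∈ R) := by
    intro i j hij
    exact (hspec j).2.2.1 (f i) (hmemrange hij)
  -- Ramsey: extract a homogeneous subsequence for the colouring above the diagonal
  obtain ⟨g, hg, hcase⟩ := ramsey_pairs (fun i j => (a i, b j) ∈ R)
  rcases hcase with hpos | hneg
  · -- above the diagonal everything is related; use the b' sequence
    refine dlp_triangle h (a := fun k => a (g k)) (b := fun l => b' (g l))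
      (P := True) (Q := False) ?_ ?_ (by simp)
    · intro k l hkl
      have hgl : g k < g l := hg hkl
      simp only [iff_true]
      exact (hup (g k) (g l) hgl).mp (hpos k l hkl)
    · intro k l hlk
      have hgl : g l ≤ g k := le_of_lt (hg hlk)
      simp only [iff_false]
      exact (hlow (g k) (g l) hgl).2
  · -- above the diagonal nothing is related; use the b sequence
    refine dlp_triangle h (a := fun k => a (g k)) (b := fun l => b (g l))
      (P := False) (Q := True) ?_ ?_ (by simp)
    · intro k l hkl
      simp only [iff_false]
      exact hneg k l hkl
    · intro k l hlk
      have hgl : g l ≤ g k := le_of_lt (hg hlk)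
      simp only [iff_true]
      exact (hlow (g k) (g l) hgl).1

end Definability

section Swap
variable {X Y : Type*}

def swapRel (R : Set (X × Y)) : Set (Y × X) := {p | (p.2, p.1) ∈ R}

lemma dlp_swap {R : Set (X × Y)} (h : DLP (chi R)) : DLP (chi (swapRel R)) := by
  intro a b u v L L' h1 h2 h3 h4
  have hc : ∀ i j, chi (swapRel R) (a i) (b j) = chi R (b j) (a i) := fun i j => rfl
  refine (h b a v u L' L ?_ h4 ?_ h2).symm
  · intro j
    exact (h3 j).congr (fun i => (hc i j))
  · intro i
    exact (h1 i).congr (fun j => (hc i j))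

lemma colAlg_swap (R : Set (X × Y)) : colAlg (swapRel R) = rowAlg R := rfl
lemma rowAlg_swap (R : Set (X × Y)) : rowAlg (swapRel R) = colAlg R := rfl
lemma dSet_swap (R : Set (X × Y)) (V : Set (Set Y)) : dSet (swapRel R) V = eSet R V := rfl

lemma eSet_mem_colAlg {R : Set (X × Y)} (h : DLP (chi R)) {V : Set (Set Y)}
    (hV : IsUltraOn (rowAlg R) V) : eSet R V ∈ colAlg R := by
  have := dSet_mem_rowAlg (dlp_swap h) (U := V) (by rw [colAlg_swap]; exact hV)
  rwa [rowAlg_swap, dSet_swap] at this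

end Swap

section Symmetry
variable {X Y : Type*} {R : Set (X × Y)}

lemma sym_caseA (h : DLP (chi R)) {U : Set (Set X)} {V : Set (Set Y)}
    (hU : IsUltraOn (colAlg R) U) (hV : IsUltraOn (rowAlg R) V)
    (heV : eSet R V ∈ colAlg R)
    (hd : dSet R U ∈ V) (he : eSet R V ∉ U) : False := by
  classical
  have hXne : Nonempty X := ⟨(ultra_nonempty_of_mem hU hU.2.2.1).choose⟩
  have hYne : Nonempty Y := ⟨(ultra_nonempty_of_mem hV hV.2.2.1).choose⟩
  obtain ⟨f, hf⟩ := exists_seq_history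
    (P := fun (l : List (X × Y)) (t : X × Y) =>
      (∀ t₀ ∈ l, t₀.1 ∉ eSet R V ∧ t₀.2 ∈ dSet R U) →
        (t.1 ∉ eSet R V ∧ (∀ t₀ ∈ l, (t.1, t₀.2) ∈ R) ∧
         t.2 ∈ dSet R U ∧ (t.1, t.2) ∉ R ∧ (∀ t₀ ∈ l, (t₀.1, t.2) ∉ R)))
    (by
      intro l
      by_cases hinv : ∀ t₀ ∈ l, t₀.1 ∉ eSet R V ∧ t₀.2 ∈ dSet R U
      · have hmema : ((eSet R V)ᶜ ∩ {x | ∀ t₀ ∈ l, x ∈ {x | (x, t₀.2) ∈ R}}) ∈ U := by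
          refine hU.2.2.2.1 _ (ultra_compl_mem hU heV he) _ ?_
          exact ultra_list_inter hU (fun t₀ ht₀ => (hinv t₀ ht₀).2)
        obtain ⟨a, ha1, ha2⟩ := ultra_nonempty_of_mem hU hmema
        have hmemb : (dSet R U ∩ ({y | (a, y) ∈ R}ᶜ ∩
            {y | ∀ t₀ ∈ l, y ∈ {y | (t₀.1, y) ∈ R}ᶜ})) ∈ V := by
          refine hV.2.2.2.1 _ hd _ (hV.2.2.2.1 _
            (ultra_compl_mem hV (row_mem_rowAlg R a) ha1) _ ?_)
          exact ultra_list_inter hV (fun t₀ ht₀ =>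
            ultra_compl_mem hV (row_mem_rowAlg R t₀.1) (hinv t₀ ht₀).1)
        obtain ⟨b, hb1, hb2, hb3⟩ := ultra_nonempty_of_mem hV hmemb
        exact ⟨(a, b), fun _ => ⟨ha1, ha2, hb1, hb2, hb3⟩⟩
      · exact ⟨Classical.arbitrary (X × Y), fun hi => absurd hi hinv⟩)
  have hinv : ∀ n, ∀ t₀ ∈ (List.range n).map f, t₀.1 ∉ eSet R V ∧ t₀.2 ∈ dSet R U := by
    intro n
    induction n with
    | zero => simp
    | succ n ih =>
        intro t₀ ht₀
        rw [List.range_succ, List.map_append] at ht₀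
        rcases List.mem_append.mp ht₀ with hm | hm
        · exact ih t₀ hm
        · simp only [List.map_cons, List.map_nil, List.mem_singleton] at hm
          subst hm
          exact ⟨((hf n) ih).1, ((hf n) ih).2.2.1⟩
  have hspec := fun n => (hf n) (hinv n)
  have hmemrange : ∀ {m n : ℕ}, m < n → f m ∈ (List.range n).map f :=
    fun hmn => List.mem_map_of_mem (f := f) (List.mem_range.mpr hmn)
  exact dlp_triangle h (a := fun n => (f n).1) (b := fun n => (f n).2)
    (P := False) (Q := True)
    (fun i j hij => iff_false_intro ((hspec j).2.2.2.2 (f i) (hmemrange hij)))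
    (fun i j hji => iff_true_intro ((hspec i).2.1 (f j) (hmemrange hji)))
    (by simp)

lemma sym_caseB (h : DLP (chi R)) {U : Set (Set X)} {V : Set (Set Y)}
    (hU : IsUltraOn (colAlg R) U) (hV : IsUltraOn (rowAlg R) V)
    (hdU : dSet R U ∈ rowAlg R)
    (hd : dSet R U ∉ V) (he : eSet R V ∈ U) : False := by
  classical
  have hXne : Nonempty X := ⟨(ultra_nonempty_of_mem hU hU.2.2.1).choose⟩
  have hYne : Nonempty Y := ⟨(ultra_nonempty_of_mem hV hV.2.2.1).choose⟩
  obtain ⟨f, hf⟩ := exists_seq_history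
    (P := fun (l : List (X × Y)) (t : X × Y) =>
      (∀ t₀ ∈ l, t₀.1 ∈ eSet R V ∧ t₀.2 ∉ dSet R U) →
        (t.1 ∈ eSet R V ∧ (∀ t₀ ∈ l, (t.1, t₀.2) ∉ R) ∧
         t.2 ∉ dSet R U ∧ (t.1, t.2) ∈ R ∧ (∀ t₀ ∈ l, (t₀.1, t.2) ∈ R)))
    (by
      intro l
      by_cases hinv : ∀ t₀ ∈ l, t₀.1 ∈ eSet R V ∧ t₀.2 ∉ dSet R U
      · have hmema : (eSet R V ∩ {x | ∀ t₀ ∈ l, x ∈ {x | (x, t₀.2) ∈ R}ᶜ}) ∈ U := by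
          refine hU.2.2.2.1 _ he _ ?_
          exact ultra_list_inter hU (fun t₀ ht₀ =>
            ultra_compl_mem hU (col_mem_colAlg R t₀.2) (hinv t₀ ht₀).2)
        obtain ⟨a, ha1, ha2⟩ := ultra_nonempty_of_mem hU hmema
        have hmemb : ((dSet R U)ᶜ ∩ ({y | (a, y) ∈ R} ∩
            {y | ∀ t₀ ∈ l, y ∈ {y | (t₀.1, y) ∈ R}})) ∈ V := by
          refine hV.2.2.2.1 _ (ultra_compl_mem hV hdU hd) _ (hV.2.2.2.1 _ ha1 _ ?_)
          exact ultra_list_inter hV (fun t₀ ht₀ => (hinv t₀ ht₀).1)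
        obtain ⟨b, hb1, hb2, hb3⟩ := ultra_nonempty_of_mem hV hmemb
        exact ⟨(a, b), fun _ => ⟨ha1, ha2, hb1, hb2, hb3⟩⟩
      · exact ⟨Classical.arbitrary (X × Y), fun hi => absurd hi hinv⟩)
  have hinv : ∀ n, ∀ t₀ ∈ (List.range n).map f, t₀.1 ∈ eSet R V ∧ t₀.2 ∉ dSet R U := by
    intro n
    induction n with
    | zero => simp
    | succ n ih =>
        intro t₀ ht₀
        rw [List.range_succ, List.map_append] at ht₀
        rcases List.mem_append.mp ht₀ with hm | hm
        · exact ih t₀ hm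
        · simp only [List.map_cons, List.map_nil, List.mem_singleton] at hm
          subst hm
          exact ⟨((hf n) ih).1, ((hf n) ih).2.2.1⟩
  have hspec := fun n => (hf n) (hinv n)
  have hmemrange : ∀ {m n : ℕ}, m < n → f m ∈ (List.range n).map f :=
    fun hmn => List.mem_map_of_mem (f := f) (List.mem_range.mpr hmn)
  exact dlp_triangle h (a := fun n => (f n).1) (b := fun n => (f n).2)
    (P := True) (Q := False)
    (fun i j hij => iff_true_intro ((hspec j).2.2.2.2 (f i) (hmemrange hij)))
    (fun i j hji => iff_false_intro ((hspec i).2.1 (f j) (hmemrange hji)))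
    (by simp)

lemma morley_sym (h : DLP (chi R)) {U : Set (Set X)} {V : Set (Set Y)}
    (hU : IsUltraOn (colAlg R) U) (hV : IsUltraOn (rowAlg R) V) :
    (dSet R U ∈ V ↔ eSet R V ∈ U) := by
  constructor
  · intro hd
    by_contra he
    exact sym_caseA h hU hV (eSet_mem_colAlg h hV) hd he
  · intro he
    by_contra hd
    exact sym_caseB h hU hV (dSet_mem_rowAlg h hU) hd he

end Symmetry

/-- commutativity of the Morley product for measures decomposed as
weighted sums of ultrafilters, when the indicator of `R` has the double limit
property. -/
theorem morley_product_commutes {X Y : Type*} (R : Set (X × Y)) (h : DLP (chi R))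
    (μ : Set X → ℝ) (ν : Set Y → ℝ)
    (hμ : IsFAP (colAlg R) μ) (hν : IsFAP (rowAlg R) ν)
    (I J : Set ℕ) (U : ℕ → Set (Set X)) (V : ℕ → Set (Set Y)) (r s : ℕ → ℝ)
    (hU : ∀ i ∈ I, IsUltraOn (colAlg R) (U i))
    (hUdist : ∀ i ∈ I, ∀ j ∈ I, i ≠ j → U i ≠ U j)
    (hr : ∀ i ∈ I, 0 < r i)
    (hrsum : HasSum (fun i : I => r (i : ℕ)) 1)
    (hμeq : ∀ A ∈ colAlg R, μ A = ∑' i : {i : ℕ // i ∈ I ∧ A ∈ U i}, r (i : ℕ))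
    (hV : ∀ j ∈ J, IsUltraOn (rowAlg R) (V j))
    (hVdist : ∀ i ∈ J, ∀ j ∈ J, i ≠ j → V i ≠ V j)
    (hs : ∀ j ∈ J, 0 < s j)
    (hssum : HasSum (fun j : J => s (j : ℕ)) 1)
    (hνeq : ∀ B ∈ rowAlg R, ν B = ∑' j : {j : ℕ // j ∈ J ∧ B ∈ V j}, s (j : ℕ)) :
    (∀ i ∈ I, dSet R (U i) ∈ rowAlg R) ∧
    (∀ j ∈ J, eSet R (V j) ∈ colAlg R) ∧
    ∑' i : I, r (i : ℕ) * ν (dSet R (U (i : ℕ))) =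
      ∑' j : J, s (j : ℕ) * μ (eSet R (V (j : ℕ))) := by
  classical
  have hdmem : ∀ i ∈ I, dSet R (U i) ∈ rowAlg R := fun i hi => dSet_mem_rowAlg h (hU i hi)
  have hemem : ∀ j ∈ J, eSet R (V j) ∈ colAlg R := fun j hj => eSet_mem_colAlg h (hV j hj)
  refine ⟨hdmem, hemem, ?_⟩
  have hsym : ∀ i ∈ I, ∀ j ∈ J, (dSet R (U i) ∈ V j ↔ eSet R (V j) ∈ U i) :=
    fun i hi j hj => morley_sym h (hU i hi) (hV j hj)
  set F : ℕ × ℕ → ℝ := fun p =>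
    if p.1 ∈ I ∧ p.2 ∈ J ∧ dSet R (U p.1) ∈ V p.2 then r p.1 * s p.2 else 0 with hFdef
  -- summability of F
  have hrind : HasSum (Set.indicator I r) 1 := hasSum_subtype_iff_indicator.mp hrsum
  have hsind : HasSum (Set.indicator J s) 1 := hasSum_subtype_iff_indicator.mp hssum
  have hrnn : ∀ i, 0 ≤ Set.indicator I r i :=
    fun i => Set.indicator_nonneg (fun i hi => (hr i hi).le) i
  have hsnn : ∀ j, 0 ≤ Set.indicator J s j :=
    fun j => Set.indicator_nonneg (fun j hj => (hs j hj).le) j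
  have hGsum : Summable (fun p : ℕ × ℕ => Set.indicator I r p.1 * Set.indicator J s p.2) :=
    Summable.mul_of_nonneg hrind.summable hsind.summable hrnn hsnn
  have hFnn : ∀ p, 0 ≤ F p := by
    intro p
    rw [hFdef]
    dsimp only
    split_ifs with hp
    · exact mul_nonneg (hr _ hp.1).le (hs _ hp.2.1).le
    · exact le_refl 0
  have hFle : ∀ p, F p ≤ Set.indicator I r p.1 * Set.indicator J s p.2 := by
    intro p
    rw [hFdef]
    dsimp only
    split_ifs with hp
    · rw [Set.indicator_of_mem hp.1, Set.indicator_of_mem hp.2.1]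
    · exact mul_nonneg (hrnn _) (hsnn _)
  have hFsum : Summable F := hGsum.of_nonneg_of_le hFnn hFle
  -- LHS as a double sum
  have hLHS : ∑' i : I, r (i : ℕ) * ν (dSet R (U (i : ℕ))) = ∑' i : ℕ, ∑' j : ℕ, F (i, j) := by
    rw [tsum_subtype I (fun i => r i * ν (dSet R (U i)))]
    refine tsum_congr fun i => ?_
    by_cases hi : i ∈ I
    · rw [Set.indicator_of_mem hi]
      have hd : ν (dSet R (U i)) =
          ∑' j : ({j | j ∈ J ∧ dSet R (U i) ∈ V j} : Set ℕ), s (j : ℕ) :=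
        hνeq _ (hdmem i hi)
      rw [hd, tsum_subtype, ← tsum_mul_left]
      refine tsum_congr fun j => ?_
      by_cases hj : j ∈ J ∧ dSet R (U i) ∈ V j
      · rw [Set.indicator_of_mem (show j ∈ {j | j ∈ J ∧ dSet R (U i) ∈ V j} from hj) s, hFdef]
        dsimp only
        rw [if_pos ⟨hi, hj⟩]
      · rw [Set.indicator_of_notMem (show j ∉ {j | j ∈ J ∧ dSet R (U i) ∈ V j} from hj) s, hFdef, mul_zero]
        dsimp only
        rw [if_neg (by tauto)]
    · rw [Set.indicator_of_notMem hi]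
      have hz : ∀ j : ℕ, F (i, j) = 0 := by
        intro j
        rw [hFdef]
        dsimp only
        rw [if_neg (by tauto)]
      rw [tsum_congr hz, tsum_zero]
  -- RHS as a double sum
  have hRHS : ∑' j : J, s (j : ℕ) * μ (eSet R (V (j : ℕ))) = ∑' j : ℕ, ∑' i : ℕ, F (i, j) := by
    rw [tsum_subtype J (fun j => s j * μ (eSet R (V j)))]
    refine tsum_congr fun j => ?_
    by_cases hj : j ∈ J
    · rw [Set.indicator_of_mem hj]
      have he : μ (eSet R (V j)) =
          ∑' i : ({i | i ∈ I ∧ eSet R (V j) ∈ U i} : Set ℕ), r (i : ℕ) :=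
        hμeq _ (hemem j hj)
      rw [he, tsum_subtype, ← tsum_mul_left]
      refine tsum_congr fun i => ?_
      by_cases hi : i ∈ I ∧ eSet R (V j) ∈ U i
      · rw [Set.indicator_of_mem (show i ∈ {i | i ∈ I ∧ eSet R (V j) ∈ U i} from hi) r, hFdef]
        dsimp only
        rw [if_pos ⟨hi.1, hj, (hsym i hi.1 j hj).mpr hi.2⟩, mul_comm]
      · rw [Set.indicator_of_notMem (show i ∉ {i | i ∈ I ∧ eSet R (V j) ∈ U i} from hi) r, mul_zero, hFdef]
        dsimp only
        rw [if_neg (fun hc => hi ⟨hc.1, (hsym i hc.1 j hc.2.1).mp hc.2.2⟩)]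
    · rw [Set.indicator_of_notMem hj]
      have hz : ∀ i : ℕ, F (i, j) = 0 := by
        intro i
        rw [hFdef]
        dsimp only
        rw [if_neg (by tauto)]
      rw [tsum_congr hz, tsum_zero]
  have hcomm : ∑' (c : ℕ) (b : ℕ), (fun i j => F (i, j)) b c =
      ∑' (b : ℕ) (c : ℕ), (fun i j => F (i, j)) b c :=
    Summable.tsum_comm' (f := fun i j => F (i, j)) hFsum (fun i => hFsum.prod_factor i)
      (fun j => hFsum.prod_symm.prod_factor j)
  rw [hLHS, hRHS]
  exact hcomm.symm
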